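/- arXiv:1005.5288 — 3 statements merged into one kernel-verified Lean document; each statement's English description precedes it below -/
import Mathlib

section
/- If the sequence of functions φ_n(t) satisfies the discrete linear wave equation ∂_t φ_n = (φ_{n+1} - φ_{n-1})/(2h), and u_n(t) is defined by the discrete Cole–Hopf transformation u_n = (φ_{n+1} - φ_n)/(h φ_n) with φ_n(t) ≠ 0 and 1 + h u_{n-1}(t) ≠ 0 for all n, then u_n satisfies the differential-difference Burgers equation ∂_t u_n = (1/(2h)) [ (1 + h u_n)(u_{n+1} - u_n) - (u_{n-1} - u_n)/(1 + h u_{n-1}) ]. -/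
/-- Discrete Cole–Hopf: if φ satisfies the discrete linear wave equation and
u_n = (φ_{n+1} - φ_n)/(h φ_n), then u satisfies the differential-difference
Burgers equation. -/
theorem cole_hopf_linearizes_burgers
    (h : ℝ) (hh : 0 < h) (φ : ℤ → ℝ → ℝ)
    (hφdiff : ∀ n : ℤ, Differentiable ℝ (φ n))
    (hφne : ∀ (n : ℤ) (t : ℝ), φ n t ≠ 0)
    (u : ℤ → ℝ → ℝ)
    (hu : ∀ (n : ℤ) (t : ℝ), u n t = (φ (n + 1) t - φ n t) / (h * φ n t))
    (hden : ∀ (n : ℤ) (t : ℝ), 1 + h * u (n - 1) t ≠ 0)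
    (hwave : ∀ (n : ℤ) (t : ℝ),
      HasDerivAt (φ n) ((φ (n + 1) t - φ (n - 1) t) / (2 * h)) t) :
    ∀ (n : ℤ) (t : ℝ),
      HasDerivAt (u n)
        ((1 / (2 * h)) * ((1 + h * u n t) * (u (n + 1) t - u n t)
          - (u (n - 1) t - u n t) / (1 + h * u (n - 1) t))) t := by
  intro n t
  have e1 : (n:ℤ)+1+1 = n+2 := by ring
  have e2 : (n:ℤ)+1-1 = n := by ring
  have e3 : (n:ℤ)-1+1 = n := by ring
  have h1 : HasDerivAt (φ (n+1)) ((φ (n+2) t - φ n t)/(2*h)) t := by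
    simpa [e1, e2] using hwave (n+1) t
  have h0 := hwave n t
  have hg : HasDerivAt (fun s => h * φ n s)
      (h * ((φ (n+1) t - φ (n-1) t)/(2*h))) t := h0.const_mul h
  have hgne : h * φ n t ≠ 0 := mul_ne_zero (ne_of_gt hh) (hφne n t)
  have hd := (h1.sub h0).div hg hgne
  have hux : u n = fun s => (φ (n+1) s - φ n s)/(h * φ n s) := by
    funext s; exact hu n s
  rw [hux]
  refine hd.congr_deriv ?_
  have hum := hu (n-1) t
  rw [e3] at hum
  have hden' := hden n t
  rw [hum] at hden'
  have hne0 := hφne n t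
  have hne1 := hφne (n+1) t
  have hnem := hφne (n-1) t
  have hhne : h ≠ 0 := ne_of_gt hh
  have hsimp : 1 + h * ((φ n t - φ (n-1) t) / (h * φ (n-1) t))
      = φ n t / φ (n-1) t := by
    field_simp
    ring
  simp only [hu (n+1) t, hum, e1, hsimp, Pi.sub_apply]
  field_simp
  ring
end

section
/- Conversely, suppose u_n(t) satisfies the differential-difference Burgers equation ∂_t u_n = (1/(2h)) [ (1 + h u_n)(u_{n+1} - u_n) - (u_{n-1} - u_n)/(1 + h u_{n-1}) ], with 1 + h u_n(t) ≠ 0 for all n and t. Define φ_n(t) for n ≥ n₀ + 1 by φ_n = φ_{n₀} ∏_{j=n₀}^{n-1} (1 + h u_j), where φ_{n₀}(t) satisfies the ODE φ_{n₀}' = (1/(2h)) [ 1 + h u_{n₀} - 1/(1 + h u_{n₀-1}) ] φ_{n₀}. Then for all n ≥ n₀ + 1, φ satisfies the discrete linear wave equation ∂_t φ_n = (φ_{n+1} - φ_{n-1})/(2h). -/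
open Finset

/-- Inverse Cole–Hopf: if u satisfies the differential-difference Burgers equation
and φ is defined by the product formula from a solution φ₀ of the stated ODE,
then φ satisfies the discrete linear wave equation for n ≥ n₀ + 1. -/
theorem burgers_to_discrete_wave
    (h : ℝ) (hh : 0 < h) (n₀ : ℤ)
    (u : ℤ → ℝ → ℝ)
    (hudiff : ∀ n : ℤ, Differentiable ℝ (u n))
    (hden : ∀ (n : ℤ) (t : ℝ), 1 + h * u n t ≠ 0)
    (hburgers : ∀ (n : ℤ) (t : ℝ),
      HasDerivAt (u n)
        ((1 / (2 * h)) * ((1 + h * u n t) * (u (n + 1) t - u n t)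
          - (u (n - 1) t - u n t) / (1 + h * u (n - 1) t))) t)
    (φ₀ : ℝ → ℝ)
    (hφ₀ : ∀ t : ℝ,
      HasDerivAt φ₀
        ((1 / (2 * h)) * (1 + h * u n₀ t - 1 / (1 + h * u (n₀ - 1) t)) * φ₀ t) t)
    (φ : ℤ → ℝ → ℝ)
    (hφ : ∀ (n : ℤ) (t : ℝ),
      φ n t = φ₀ t * ∏ j ∈ Finset.Ico n₀ n, (1 + h * u j t)) :
    ∀ (n : ℤ) (t : ℝ), n₀ + 1 ≤ n →
      HasDerivAt (φ n) ((φ (n + 1) t - φ (n - 1) t) / (2 * h)) t := by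
  have h2h : (2 * h) ≠ 0 := by positivity
  -- recursion for φ
  have hstep : ∀ n : ℤ, n₀ ≤ n → ∀ t : ℝ, φ (n + 1) t = φ n t * (1 + h * u n t) := by
    intro n hn t
    have hins : Finset.Ico n₀ (n + 1) = insert n (Finset.Ico n₀ n) := by
      ext x; simp only [Finset.mem_Ico, Finset.mem_insert]; omega
    rw [hφ, hφ, hins, Finset.prod_insert Finset.right_notMem_Ico]
    ring
  -- the ODE for φ n, by induction on n ≥ n₀
  have key : ∀ n : ℤ, n₀ ≤ n → ∀ t : ℝ,
      HasDerivAt (φ n)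
        ((1 / (2 * h)) * (1 + h * u n t - 1 / (1 + h * u (n - 1) t)) * φ n t) t := by
    refine Int.le_induction ?_ ?_
    · intro t
      have hφn : φ n₀ = φ₀ := funext fun s => by simp [hφ]
      rw [hφn]; exact hφ₀ t
    · intro n hn ih t
      have hφeq : φ (n + 1) = fun s => φ n s * (1 + h * u n s) :=
        funext fun s => hstep n hn s
      have hd : HasDerivAt (fun s => φ n s * (1 + h * u n s))
          (((1 / (2 * h)) * (1 + h * u n t - 1 / (1 + h * u (n - 1) t)) * φ n t)
              * (1 + h * u n t)
            + φ n t * (((1 / (2 * h)) * ((1 + h * u n t) * (u (n + 1) t - u n t)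
                - (u (n - 1) t - u n t) / (1 + h * u (n - 1) t))) * h)) t := by
        have hu : HasDerivAt (fun s => 1 + h * u n s)
            (((1 / (2 * h)) * ((1 + h * u n t) * (u (n + 1) t - u n t)
              - (u (n - 1) t - u n t) / (1 + h * u (n - 1) t))) * h) t := by
          have := ((hburgers n t).const_mul h).const_add 1
          exact this.congr_deriv (by ring)
        exact (ih t).mul hu
      rw [hφeq]
      convert hd using 1
      simp only
      have hsub : (n : ℤ) + 1 - 1 = n := by ring
      rw [hsub]
      have e1 := hden (n - 1) t
      have e2 := hden n t
      field_simp
      ring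
  intro n t hn
  have hn' : n₀ ≤ n - 1 := by omega
  have hn'' : n₀ ≤ n := by omega
  have hrec1 : φ (n + 1) t = φ n t * (1 + h * u n t) := hstep n hn'' t
  have hrec2 : φ n t = φ (n - 1) t * (1 + h * u (n - 1) t) := by
    have := hstep (n - 1) hn' t
    rw [sub_add_cancel] at this
    exact this
  have hd := key n hn'' t
  convert hd using 1
  rw [hrec1]
  rw [hrec2]
  have e1 := hden (n - 1) t
  field_simp
end

section
/- The coefficient ρ₂ of the NLS reduction of the discrete Burgers equation, ρ₂ = -[2hσ sin²(ωσ/2) sin(κh/2) / ((cos(κh) - cos(ωσ)) cos(ωσ))] · ([2cos(κh/2) - cos(3κh/2)] + i sin(κh/2)), has nonzero imaginary part whenever h, σ > 0, sin(ωσ/2) ≠ 0, sin(κh/2) ≠ 0, cos(κh) ≠ cos(ωσ), and cos(ωσ) ≠ 0. In particular ρ₂ ≠ 0, so the A₁ C-integrability condition ρ₂ = 0 fails. -/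
open Complex

/-- The NLS coefficient ρ₂ of the discrete Burgers reduction has nonzero
imaginary part (so ρ₂ ≠ 0 and the A₁ C-integrability condition fails). -/
theorem rho2_not_real
    (h σ κ ω : ℝ) (hh : 0 < h) (hσ : 0 < σ)
    (hdisp : Real.sin (ω * σ) = -(σ / h) * Real.sin (κ * h))
    (hs1 : Real.sin (ω * σ / 2) ≠ 0)
    (hs2 : Real.sin (κ * h / 2) ≠ 0)
    (hc1 : Real.cos (κ * h) ≠ Real.cos (ω * σ))
    (hc2 : Real.cos (ω * σ) ≠ 0)
    (ρ₂ : ℂ)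
    (hρ : ρ₂ = -((2 * h * σ * Real.sin (ω * σ / 2) ^ 2 * Real.sin (κ * h / 2)
            / ((Real.cos (κ * h) - Real.cos (ω * σ)) * Real.cos (ω * σ)) : ℝ) : ℂ)
          * (((2 * Real.cos (κ * h / 2) - Real.cos (3 * κ * h / 2) : ℝ) : ℂ)
              + Complex.I * ((Real.sin (κ * h / 2) : ℝ) : ℂ))) :
    ρ₂.im ≠ 0 ∧ ρ₂ ≠ 0 := by

  have hc : (2 * h * σ * Real.sin (ω * σ / 2) ^ 2 * Real.sin (κ * h / 2)
      / ((Real.cos (κ * h) - Real.cos (ω * σ)) * Real.cos (ω * σ))) ≠ 0 := by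
    apply div_ne_zero
    · positivity
    · exact mul_ne_zero (sub_ne_zero.mpr hc1) hc2
  have him : ρ₂.im = -(2 * h * σ * Real.sin (ω * σ / 2) ^ 2 * Real.sin (κ * h / 2)
      / ((Real.cos (κ * h) - Real.cos (ω * σ)) * Real.cos (ω * σ))) * Real.sin (κ * h / 2) := by
    rw [hρ]; simp only [neg_mul, Complex.neg_im, Complex.mul_im, Complex.ofReal_re,
      Complex.ofReal_im, Complex.add_im, Complex.add_re, Complex.I_re, Complex.I_im,
      Complex.mul_re]; ring
  have h1 : ρ₂.im ≠ 0 := by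
    rw [him]
    exact mul_ne_zero (neg_ne_zero.mpr hc) hs2
  exact ⟨h1, fun h0 => h1 (by rw [h0]; simp)⟩
end
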